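/- For every bounded measurable a : [0,∞) → ℂ, lim_{n → ∞} |γ_a(n) − √(2/π)·∫_0^∞ a(y)·e^{−2(y − √n)²} dy| = 0, where γ_a(n) = (1/n!)·∫_0^∞ a(√r)·e^{-r}·r^n dr. -/

import Mathlib

open MeasureTheory Real Set Filter

noncomputable def gfun (n : ℕ) (y : ℝ) : ℝ :=
  2 * y ^ (2 * n + 1) * Real.exp (-y ^ 2) / (Nat.factorial n)

noncomputable def hfun (s : ℝ) : ℝ := Real.sqrt (2 / Real.pi) * Real.exp (-2 * s ^ 2)

lemma hfun_nonneg (s : ℝ) : 0 ≤ hfun s := by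
  unfold hfun; positivity

lemma gfun_nonneg (n : ℕ) {y : ℝ} (hy : 0 ≤ y) : 0 ≤ gfun n y := by
  unfold gfun; positivity

lemma gfun_continuous (n : ℕ) : Continuous (gfun n) := by
  unfold gfun
  fun_prop

lemma hfun_continuous : Continuous hfun := by
  unfold hfun; fun_prop

/-- change of variables r = y^2 -/
lemma cov_sq {F : Type*} [NormedAddCommGroup F] [NormedSpace ℝ F] (g : ℝ → F) :
    ∫ r in Set.Ioi (0:ℝ), g r = ∫ y in Set.Ioi (0:ℝ), (2*y) • g (y^2) := by
  have himg : (fun y : ℝ => y^2) '' Set.Ioi 0 = Set.Ioi 0 := by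
    ext x
    constructor
    · rintro ⟨y, hy, rfl⟩; exact pow_pos (show (0:ℝ) < y from hy) 2
    · intro hx
      exact ⟨Real.sqrt x, Real.sqrt_pos.2 hx, Real.sq_sqrt hx.le⟩
  have hderiv : ∀ x ∈ Set.Ioi (0:ℝ),
      HasDerivWithinAt (fun y : ℝ => y^2) (2*x) (Set.Ioi 0) x := by
    intro x _
    simpa using (hasDerivAt_pow 2 x).hasDerivWithinAt
  have hinj : Set.InjOn (fun y : ℝ => y^2) (Set.Ioi 0) := by
    intro x hx y hy hxy
    simp only at hxy
    calc x = Real.sqrt (x^2) := (Real.sqrt_sq hx.le).symm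
    _ = Real.sqrt (y^2) := by rw [hxy]
    _ = y := Real.sqrt_sq hy.le
  calc ∫ r in Set.Ioi (0:ℝ), g r
      = ∫ r in (fun y : ℝ => y^2) '' Set.Ioi 0, g r := by rw [himg]
    _ = ∫ y in Set.Ioi (0:ℝ), |2*y| • g (y^2) :=
        integral_image_eq_integral_abs_deriv_smul measurableSet_Ioi hderiv hinj g
    _ = ∫ y in Set.Ioi (0:ℝ), (2*y) • g (y^2) := by
        refine setIntegral_congr_fun measurableSet_Ioi ?_
        intro y hy
        have hy' : (0:ℝ) < y := hy
        dsimp only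
        rw [abs_of_nonneg (by positivity : (0:ℝ) ≤ 2*y)]

/-- Gamma integral: ∫_{Ioi 0} exp(-r) r^n = n! -/
lemma gamma_int (n : ℕ) :
    ∫ r in Set.Ioi (0:ℝ), Real.exp (-r) * r ^ n = (Nat.factorial n : ℝ) := by
  have h := Real.Gamma_eq_integral (s := (n:ℝ) + 1) (by positivity)
  rw [Real.Gamma_nat_eq_factorial] at h
  rw [h]
  refine setIntegral_congr_fun measurableSet_Ioi ?_
  intro x hx
  dsimp only
  rw [add_sub_cancel_right, Real.rpow_natCast]

lemma gfun_eq (n : ℕ) (y : ℝ) :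
    gfun n y = (2*y) * (Real.exp (-(y^2)) * (y^2)^n) / (Nat.factorial n) := by
  unfold gfun
  rw [← pow_mul]
  ring_nf

/-- total mass of gfun is 1 -/
lemma gfun_int (n : ℕ) : ∫ y in Set.Ioi (0:ℝ), gfun n y = 1 := by
  have h := cov_sq (F := ℝ) (fun r => Real.exp (-r) * r ^ n)
  rw [gamma_int n] at h
  have : ∫ y in Set.Ioi (0:ℝ), gfun n y
      = (∫ y in Set.Ioi (0:ℝ), (2*y) • (Real.exp (-(y^2)) * (y^2)^n)) / (Nat.factorial n) := by
    rw [← integral_div]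
    refine setIntegral_congr_fun measurableSet_Ioi ?_
    intro y _
    rw [gfun_eq]
    simp [smul_eq_mul]
  rw [this, ← h]
  field_simp [Nat.factorial_ne_zero]

/-- shift for set integrals on Ioi -/
lemma shift_Ioi (f : ℝ → ℝ) (b c : ℝ) :
    ∫ y in Set.Ioi b, f y = ∫ x in Set.Ioi (b - c), f (x + c) := by
  rw [← integral_indicator measurableSet_Ioi, ← integral_indicator measurableSet_Ioi]
  rw [← integral_add_right_eq_self (Set.indicator (Set.Ioi b) f) c]
  congr 1
  funext x
  by_cases hx : b - c < x
  · simp only [Set.indicator, Set.mem_Ioi]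
    rw [if_pos (by linarith), if_pos hx]
  · simp only [Set.indicator, Set.mem_Ioi]
    rw [if_neg (by linarith), if_neg hx]

lemma hfun_total : ∫ s : ℝ, hfun s = 1 := by
  unfold hfun
  rw [integral_const_mul, integral_gaussian]
  rw [← Real.sqrt_mul (by positivity)]
  rw [show (2/π) * (π/2) = 1 by field_simp [Real.pi_ne_zero]]
  exact Real.sqrt_one

lemma hfun_integrable : Integrable hfun := by
  unfold hfun
  exact (integrable_exp_neg_mul_sq (by norm_num : (0:ℝ) < 2)).const_mul _

lemma sqrt_nat_tendsto : Tendsto (fun n : ℕ => Real.sqrt n) atTop atTop := by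
  apply tendsto_atTop_atTop.2
  intro b
  refine ⟨(⌈b⌉₊)^2, fun n hn => ?_⟩
  calc b ≤ (⌈b⌉₊ : ℝ) := Nat.le_ceil b
    _ = Real.sqrt (((⌈b⌉₊)^2 : ℕ) : ℝ) := by
        push_cast
        rw [Real.sqrt_sq (by positivity)]
    _ ≤ Real.sqrt n := Real.sqrt_le_sqrt (by exact_mod_cast hn)

noncomputable def ghat (n : ℕ) : ℝ → ℝ :=
  Set.indicator (Set.Ioi (-Real.sqrt n)) (fun t => gfun n (t + Real.sqrt n))

lemma ghat_nonneg (n : ℕ) (s : ℝ) : 0 ≤ ghat n s := by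
  unfold ghat
  by_cases hs : s ∈ Set.Ioi (-Real.sqrt n)
  · rw [Set.indicator_of_mem hs]
    have := Set.mem_Ioi.1 hs
    exact gfun_nonneg n (by linarith)
  · rw [Set.indicator_of_notMem hs]

/-- the per-n Stirling identity -/
lemma gfun_formula (n : ℕ) (hn : 1 ≤ n) (s : ℝ) (hs : -Real.sqrt n < s) :
    gfun n (s + Real.sqrt n) =
      (Stirling.stirlingSeq n)⁻¹ *
        (Real.sqrt 2 * ((1 + s / Real.sqrt n) *
          Real.exp (2*n*Real.log (1 + s / Real.sqrt n) - 2*s*Real.sqrt n - s^2))) := by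
  have hn0 : (0:ℝ) < n := by exact_mod_cast hn
  set q := Real.sqrt n with hqdef
  have hq : 0 < q := Real.sqrt_pos.2 hn0
  have hqq : q^2 = (n:ℝ) := Real.sq_sqrt hn0.le
  set u := s / q with hudef
  have hsq : 0 < s + q := by linarith
  have hu1 : (0:ℝ) < 1 + u := by
    have : 1 + u = (s + q)/q := by
      rw [hudef, eq_div_iff hq.ne', add_mul, div_mul_cancel₀ _ hq.ne']; ring
    rw [this]; positivity
  set L := Real.log (1 + u) with hLdef
  have hst : 0 < Stirling.stirlingSeq n := by
    obtain ⟨m, rfl⟩ := Nat.exists_eq_add_of_le hn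
    rw [add_comm]
    exact Stirling.stirlingSeq'_pos m
  have hfact : (Nat.factorial n : ℝ)
      = Stirling.stirlingSeq n * (Real.sqrt 2 * q * ((n:ℝ)^n / Real.exp n)) := by
    have hden : (0:ℝ) < Real.sqrt (2*n) * ((n:ℝ)/Real.exp 1)^n := by positivity
    have h1 : Stirling.stirlingSeq n
        = (Nat.factorial n : ℝ) / (Real.sqrt (2*n) * ((n:ℝ)/Real.exp 1)^n) := rfl
    have h2 : Real.sqrt (2*n) = Real.sqrt 2 * q := by
      rw [hqdef, Real.sqrt_mul (by norm_num)]
    have h3 : ((n:ℝ)/Real.exp 1)^n = (n:ℝ)^n / Real.exp n := by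
      rw [div_pow, Real.exp_one_pow]
    rw [h2, h3] at h1
    field_simp at h1 ⊢
    linarith [h1]
  have hexp1 : ((1:ℝ)+u)^(2*n) = Real.exp (2*n*L) := by
    have h4 : ((1:ℝ)+u)^(2*n) = Real.exp L ^ (2*n) := by rw [hLdef, Real.exp_log hu1]
    rw [h4, ← Real.exp_nat_mul]
    congr 1
    push_cast
    ring
  have hpow : (s+q)^(2*n+1) = (n:ℝ)^n * q * ((1+u) * Real.exp (2*n*L)) := by
    have h5 : s + q = q * (1+u) := by
      rw [hudef, mul_add, mul_one, mul_div_assoc', mul_div_cancel_left₀ _ hq.ne']; ring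
    rw [h5, mul_pow]
    have h6 : q^(2*n+1) = (n:ℝ)^n * q := by
      rw [pow_succ, pow_mul, hqq]
    have h7 : ((1:ℝ)+u)^(2*n+1) = (1+u) * Real.exp (2*n*L) := by
      rw [pow_succ, hexp1]; ring
    rw [h6, h7]
  have hexp2 : Real.exp (-(s+q)^2) = (Real.exp n)⁻¹ * Real.exp (-(2*s*q) - s^2) := by
    rw [← Real.exp_neg, ← Real.exp_add]
    congr 1
    nlinarith [hqq]
  have hgf : gfun n (s + q) = 2 * (s+q)^(2*n+1) * Real.exp (-(s+q)^2) / (Nat.factorial n) := by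
    unfold gfun; ring_nf
  rw [hgf, hpow, hexp2, hfact]
  have hE : Real.exp (2*↑n*L - 2*s*q - s^2)
      = Real.exp (2*↑n*L) * Real.exp (-(2*s*q) - s^2) := by
    rw [← Real.exp_add]; congr 1; ring
  rw [hE]
  have h2q : (2:ℝ) = Real.sqrt 2 * Real.sqrt 2 := (Real.mul_self_sqrt (by norm_num)).symm
  have hnn : ((n:ℝ))^n ≠ 0 := by positivity
  have hen : Real.exp (n:ℝ) ≠ 0 := Real.exp_ne_zero _
  have hs2 : Real.sqrt 2 ≠ 0 := by positivity
  field_simp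
  linear_combination h2q

/-- the key pointwise limit -/
lemma key_tendsto (s : ℝ) :
    Tendsto (fun n : ℕ => ghat n s) atTop (nhds (hfun s)) := by
  have hsqrt := sqrt_nat_tendsto
  have hinv : Tendsto (fun n : ℕ => (Real.sqrt n)⁻¹) atTop (nhds 0) :=
    tendsto_inv_atTop_zero.comp hsqrt
  have hu : Tendsto (fun n : ℕ => s / Real.sqrt n) atTop (nhds 0) := by
    simpa [div_eq_mul_inv] using hinv.const_mul s
  have hE : Tendsto (fun n : ℕ => 2*(n:ℝ)*Real.log (1 + s / Real.sqrt n) - 2*s*Real.sqrt n)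
      atTop (nhds (-s^2)) := by
    rw [← tendsto_sub_nhds_zero_iff]
    rw [tendsto_zero_iff_norm_tendsto_zero]
    have habs : ∀ᶠ n : ℕ in atTop,
        ‖(2*(n:ℝ)*Real.log (1 + s/Real.sqrt n) - 2*s*Real.sqrt n) - (-s^2)‖
          ≤ 4*|s|^3 * (Real.sqrt n)⁻¹ := by
      filter_upwards [hsqrt.eventually_ge_atTop (2*|s|), hsqrt.eventually_ge_atTop 1,
        eventually_ge_atTop 1] with n h1 h2 hn1
      set q := Real.sqrt n with hqdef
      have hq : (0:ℝ) < q := by linarith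
      have hnq : (n:ℝ) = q^2 := (Real.sq_sqrt (by positivity)).symm
      set u := s / q with hudef
      have huabs : |u| = |s| / q := by
        rw [hudef, abs_div, abs_of_pos hq]
      have hu12 : |u| ≤ 1/2 := by
        rw [huabs, div_le_iff₀ hq]
        nlinarith [abs_nonneg s]
      have key : |Real.log (1+u) - u + u^2/2| ≤ 2*|u|^3 := by
        have h := Real.abs_log_sub_add_sum_range_le (x := -u)
          (by rw [abs_neg]; linarith) 2
        have hsum : (∑ i ∈ Finset.range 2, (-u) ^ (i + 1) / (i + 1)) = -u + u^2/2 := by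
          simp [Finset.sum_range_succ]
          ring
        rw [hsum, abs_neg, sub_neg_eq_add] at h
        have h' : |Real.log (1+u) - u + u^2/2| ≤ |u|^3 / (1 - |u|) := by
          have : -u + u^2/2 + Real.log (1+u) = Real.log (1+u) - u + u^2/2 := by ring
          rw [this] at h
          simpa using h
        calc |Real.log (1+u) - u + u^2/2| ≤ |u|^3 / (1 - |u|) := h'
          _ ≤ |u|^3 / (1/2) := by
              apply div_le_div_of_nonneg_left (by positivity) (by norm_num) (by linarith)
          _ = 2*|u|^3 := by ring
      have hid : (2*(n:ℝ)*Real.log (1 + u) - 2*s*q) - (-s^2)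
          = 2*q^2*(Real.log (1+u) - u + u^2/2) := by
        have h2sq : s = q * u := by rw [hudef]; field_simp
        rw [hnq, h2sq]
        ring
      rw [Real.norm_eq_abs, hid, abs_mul, abs_of_nonneg (by positivity : (0:ℝ) ≤ 2*q^2)]
      calc 2*q^2*|Real.log (1+u) - u + u^2/2| ≤ 2*q^2*(2*|u|^3) := by
            apply mul_le_mul_of_nonneg_left key (by positivity)
        _ = 4*|s|^3 * q⁻¹ := by
            rw [huabs, div_pow]
            have hq3 : q^3 = q^2 * q := by ring
            field_simp
            ring
    have hbnd : Tendsto (fun n : ℕ => 4*|s|^3 * (Real.sqrt n)⁻¹) atTop (nhds 0) := by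
      simpa using hinv.const_mul (4*|s|^3)
    exact squeeze_zero' (Eventually.of_forall (fun n => norm_nonneg _)) habs hbnd
  have T1 : Tendsto (fun n : ℕ => (Stirling.stirlingSeq n)⁻¹) atTop (nhds (Real.sqrt π)⁻¹) :=
    Stirling.tendsto_stirlingSeq_sqrt_pi.inv₀ (by positivity)
  have T2 : Tendsto (fun n : ℕ => 1 + s / Real.sqrt n) atTop (nhds 1) := by
    simpa using hu.const_add 1
  have T3 : Tendsto (fun n : ℕ =>
      Real.exp (2*(n:ℝ)*Real.log (1 + s / Real.sqrt n) - 2*s*Real.sqrt n - s^2))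
      atTop (nhds (Real.exp (-s^2 - s^2))) := by
    apply (Real.continuous_exp.tendsto _).comp
    have := hE.sub_const (s^2)
    simpa [sub_sub] using this
  have hPlim : Tendsto (fun n : ℕ => (Stirling.stirlingSeq n)⁻¹ *
      (Real.sqrt 2 * ((1 + s / Real.sqrt n) *
        Real.exp (2*(n:ℝ)*Real.log (1 + s / Real.sqrt n) - 2*s*Real.sqrt n - s^2))))
      atTop (nhds (hfun s)) := by
    have hval : hfun s = (Real.sqrt π)⁻¹ * (Real.sqrt 2 * (1 * Real.exp (-s^2 - s^2))) := by
      unfold hfun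
      rw [Real.sqrt_div (by norm_num : (0:ℝ) ≤ 2)]
      rw [show -2*s^2 = -s^2 - s^2 by ring]
      field_simp
    rw [hval]
    exact T1.mul ((T2.mul T3).const_mul _)
  apply hPlim.congr'
  filter_upwards [hsqrt.eventually_gt_atTop (-s), eventually_ge_atTop 1] with n h1 h2
  rw [eq_comm]
  unfold ghat
  rw [Set.indicator_of_mem (Set.mem_Ioi.2 (by linarith))]
  exact gfun_formula n h2 s (by linarith)

/-- dominated convergence -/
lemma M_tendsto :
    Tendsto (fun n : ℕ => ∫ x : ℝ, min (ghat n x) (hfun x)) atTop (nhds 1) := by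
  rw [← hfun_total]
  apply tendsto_integral_of_dominated_convergence hfun
  · intro n
    apply Measurable.aestronglyMeasurable
    apply Measurable.min
    · exact ((gfun_continuous n).measurable.comp (measurable_id.add_const _)).indicator
        measurableSet_Ioi
    · exact hfun_continuous.measurable
  · exact hfun_integrable
  · intro n
    filter_upwards with x
    rw [Real.norm_eq_abs, abs_of_nonneg (le_min (ghat_nonneg n x) (hfun_nonneg x))]
    exact min_le_right _ _
  · filter_upwards with x
    simpa [min_self] using (key_tendsto x).min (tendsto_const_nhds (x := hfun x))


lemma gfun_integrableOn (n : ℕ) : IntegrableOn (gfun n) (Set.Ioi (0:ℝ)) := by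
  have h := (integrableOn_rpow_mul_exp_neg_mul_sq (by norm_num : (0:ℝ) < 1)
    (s := ((2*n+1 : ℕ):ℝ))
    (by have : (0:ℝ) ≤ ((2*n+1:ℕ):ℝ) := Nat.cast_nonneg _
        linarith)).const_mul (2 / (Nat.factorial n : ℝ))
  apply IntegrableOn.congr_fun h ?_ measurableSet_Ioi
  intro y hy
  dsimp only
  rw [Real.rpow_natCast]
  unfold gfun
  rw [show (-1 : ℝ) * y^2 = -y^2 by ring]
  ring

lemma hshift_integrable (n : ℕ) : Integrable (fun y => hfun (y - Real.sqrt n)) := by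
  exact hfun_integrable.comp_sub_right _

lemma min_integrableOn (n : ℕ) :
    IntegrableOn (fun y => min (gfun n y) (hfun (y - Real.sqrt n))) (Set.Ioi (0:ℝ)) := by
  apply Integrable.mono' ((hshift_integrable n).integrableOn)
  · exact (((gfun_continuous n).measurable.min
      (hfun_continuous.measurable.comp (measurable_id.sub_const _))).aestronglyMeasurable).restrict
  · filter_upwards [ae_restrict_mem measurableSet_Ioi] with y hy
    rw [Real.norm_eq_abs, abs_of_nonneg (le_min (gfun_nonneg n (le_of_lt hy)) (hfun_nonneg _))]
    exact min_le_right _ _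

lemma M_transfer (n : ℕ) :
    ∫ y in Set.Ioi (0:ℝ), min (gfun n y) (hfun (y - Real.sqrt n))
      = ∫ x : ℝ, min (ghat n x) (hfun x) := by
  rw [shift_Ioi (fun y => min (gfun n y) (hfun (y - Real.sqrt n))) 0 (Real.sqrt n), zero_sub]
  rw [← integral_indicator measurableSet_Ioi]
  congr 1
  funext x
  by_cases hx : x ∈ Set.Ioi (-Real.sqrt n)
  · rw [Set.indicator_of_mem hx]
    unfold ghat
    rw [Set.indicator_of_mem hx]
    simp
  · rw [Set.indicator_of_notMem hx]
    unfold ghat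
    rw [Set.indicator_of_notMem hx, eq_comm, min_eq_left (hfun_nonneg x)]

lemma Abound (n : ℕ) :
    ∫ y in Set.Ioi (0:ℝ), |gfun n y - hfun (y - Real.sqrt n)|
      ≤ 2 - 2 * ∫ x : ℝ, min (ghat n x) (hfun x) := by
  rw [← M_transfer n]
  have Ig := gfun_integrableOn n
  have Ih := (hshift_integrable n).integrableOn (s := Set.Ioi (0:ℝ))
  have Im := min_integrableOn n
  have habs : ∀ y : ℝ, |gfun n y - hfun (y - Real.sqrt n)|
      = gfun n y + hfun (y - Real.sqrt n)
        - 2 * min (gfun n y) (hfun (y - Real.sqrt n)) := by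
    intro y
    rcases le_total (gfun n y) (hfun (y - Real.sqrt n)) with h | h
    · rw [abs_of_nonpos (by linarith), min_eq_left h]; ring
    · rw [abs_of_nonneg (by linarith), min_eq_right h]; ring
  have hsplit : ∫ y in Set.Ioi (0:ℝ), |gfun n y - hfun (y - Real.sqrt n)|
      = (∫ y in Set.Ioi (0:ℝ), gfun n y) + (∫ y in Set.Ioi (0:ℝ), hfun (y - Real.sqrt n))
        - 2 * ∫ y in Set.Ioi (0:ℝ), min (gfun n y) (hfun (y - Real.sqrt n)) := by
    have Ig' : IntegrableOn (fun y => gfun n y) (Set.Ioi (0:ℝ)) := Ig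
    have e1 : ∫ y in Set.Ioi (0:ℝ), |gfun n y - hfun (y - Real.sqrt n)|
        = ∫ y in Set.Ioi (0:ℝ), (gfun n y + hfun (y - Real.sqrt n)
            - 2 * min (gfun n y) (hfun (y - Real.sqrt n))) :=
      setIntegral_congr_fun measurableSet_Ioi (fun y _ => habs y)
    have e2 : ∫ y in Set.Ioi (0:ℝ), (gfun n y + hfun (y - Real.sqrt n)
            - 2 * min (gfun n y) (hfun (y - Real.sqrt n)))
        = (∫ y in Set.Ioi (0:ℝ), (gfun n y + hfun (y - Real.sqrt n)))
          - ∫ y in Set.Ioi (0:ℝ), 2 * min (gfun n y) (hfun (y - Real.sqrt n)) :=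
      integral_sub (Ig'.add Ih) (Im.const_mul 2)
    have e3 : ∫ y in Set.Ioi (0:ℝ), (gfun n y + hfun (y - Real.sqrt n))
        = (∫ y in Set.Ioi (0:ℝ), gfun n y) + ∫ y in Set.Ioi (0:ℝ), hfun (y - Real.sqrt n) :=
      integral_add Ig' Ih
    have e4 : ∫ y in Set.Ioi (0:ℝ), 2 * min (gfun n y) (hfun (y - Real.sqrt n))
        = 2 * ∫ y in Set.Ioi (0:ℝ), min (gfun n y) (hfun (y - Real.sqrt n)) :=
      integral_const_mul _ _
    rw [e1, e2, e3, e4]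
  rw [hsplit, gfun_int n]
  have hle1 : ∫ y in Set.Ioi (0:ℝ), hfun (y - Real.sqrt n) ≤ 1 := by
    have h1 : (∫ x : ℝ, hfun (x - Real.sqrt n)) = 1 := by
      rw [integral_sub_right_eq_self hfun (Real.sqrt n), hfun_total]
    have h2 := setIntegral_le_integral (s := Set.Ioi (0:ℝ))
      (f := fun y => hfun (y - Real.sqrt n)) (hshift_integrable n)
      (Eventually.of_forall (fun y => hfun_nonneg _))
    rw [h1] at h2
    exact h2
  linarith

theorem stmt_16 (a : ℝ → ℂ) (hm : Measurable a)
    (hb : ∃ C : ℝ, ∀ r : ℝ, 0 ≤ r → ‖a r‖ ≤ C) :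
    Filter.Tendsto
      (fun n : ℕ =>
        ‖(Nat.factorial n : ℂ)⁻¹ *
              (∫ r in Set.Ioi (0 : ℝ), a (Real.sqrt r) * ((Real.exp (-r) * r ^ n : ℝ) : ℂ)) -
            ((Real.sqrt (2 / Real.pi) : ℝ) : ℂ) *
              ∫ y in Set.Ioi (0 : ℝ),
                a y * ((Real.exp (-2 * (y - Real.sqrt n) ^ 2) : ℝ) : ℂ)‖)
      Filter.atTop (nhds 0) := by
  obtain ⟨C, hC⟩ := hb
  set C' := max C 0 with hC'def
  have hC'0 : (0:ℝ) ≤ C' := le_max_right _ _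
  have hC'b : ∀ r : ℝ, 0 ≤ r → ‖a r‖ ≤ C' :=
    fun r hr => (hC r hr).trans (le_max_left _ _)
  -- step 1 : rewrite the first integral
  have step1 : ∀ n : ℕ, (Nat.factorial n : ℂ)⁻¹ *
      (∫ r in Set.Ioi (0:ℝ), a (Real.sqrt r) * ((Real.exp (-r) * r ^ n : ℝ) : ℂ))
      = ∫ y in Set.Ioi (0:ℝ), a y * ((gfun n y : ℝ) : ℂ) := by
    intro n
    rw [cov_sq (F := ℂ) (fun r => a (Real.sqrt r) * ((Real.exp (-r) * r ^ n : ℝ) : ℂ)),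
      ← integral_const_mul]
    refine setIntegral_congr_fun measurableSet_Ioi ?_
    intro y hy
    have hy' : (0:ℝ) < y := hy
    dsimp only
    rw [Real.sqrt_sq hy'.le, gfun_eq]
    rw [Complex.real_smul]
    have hfac : ((Nat.factorial n : ℝ) : ℂ) ≠ 0 := by
      exact_mod_cast (Nat.cast_ne_zero (R := ℂ)).2 (Nat.factorial_ne_zero n)
    push_cast
    field_simp
  have step2 : ∀ n : ℕ, ((Real.sqrt (2 / Real.pi) : ℝ) : ℂ) *
      (∫ y in Set.Ioi (0 : ℝ), a y * ((Real.exp (-2 * (y - Real.sqrt n) ^ 2) : ℝ) : ℂ))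
      = ∫ y in Set.Ioi (0:ℝ), a y * ((hfun (y - Real.sqrt n) : ℝ) : ℂ) := by
    intro n
    rw [← integral_const_mul]
    refine setIntegral_congr_fun measurableSet_Ioi ?_
    intro y hy
    dsimp only
    unfold hfun
    rw [show (-2 * (y - Real.sqrt n)^2 : ℝ) = -(2 * (y - Real.sqrt n)^2) by ring]
    push_cast
    ring_nf
  -- key bound
  have keybound : ∀ n : ℕ,
      ‖(Nat.factorial n : ℂ)⁻¹ *
            (∫ r in Set.Ioi (0 : ℝ), a (Real.sqrt r) * ((Real.exp (-r) * r ^ n : ℝ) : ℂ)) -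
          ((Real.sqrt (2 / Real.pi) : ℝ) : ℂ) *
            ∫ y in Set.Ioi (0 : ℝ),
              a y * ((Real.exp (-2 * (y - Real.sqrt n) ^ 2) : ℝ) : ℂ)‖
      ≤ C' * (2 - 2 * ∫ x : ℝ, min (ghat n x) (hfun x)) := by
    intro n
    rw [step1 n, step2 n]
    have hmeasg : AEStronglyMeasurable (fun y => a y * ((gfun n y : ℝ) : ℂ))
        (volume.restrict (Set.Ioi (0:ℝ))) :=
      ((hm.mul (Complex.measurable_ofReal.comp
        (gfun_continuous n).measurable)).aestronglyMeasurable).restrict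
    have hmeash : AEStronglyMeasurable (fun y => a y * ((hfun (y - Real.sqrt n) : ℝ) : ℂ))
        (volume.restrict (Set.Ioi (0:ℝ))) :=
      ((hm.mul (Complex.measurable_ofReal.comp
        (hfun_continuous.measurable.comp (measurable_id.sub_const _)))).aestronglyMeasurable).restrict
    have Iag : IntegrableOn (fun y => a y * ((gfun n y : ℝ) : ℂ)) (Set.Ioi (0:ℝ)) := by
      apply Integrable.mono' ((gfun_integrableOn n).const_mul C') hmeasg
      filter_upwards [ae_restrict_mem measurableSet_Ioi] with y hy
      rw [norm_mul, Complex.norm_real, Real.norm_eq_abs,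
        abs_of_nonneg (gfun_nonneg n (le_of_lt hy))]
      exact mul_le_mul_of_nonneg_right (by
        exact hC'b y (le_of_lt hy)) (gfun_nonneg n (le_of_lt hy))
    have Iah : IntegrableOn (fun y => a y * ((hfun (y - Real.sqrt n) : ℝ) : ℂ))
        (Set.Ioi (0:ℝ)) := by
      apply Integrable.mono' (((hshift_integrable n).integrableOn).const_mul C') hmeash
      filter_upwards [ae_restrict_mem measurableSet_Ioi] with y hy
      rw [norm_mul, Complex.norm_real, Real.norm_eq_abs, abs_of_nonneg (hfun_nonneg _)]
      exact mul_le_mul_of_nonneg_right (by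
        exact hC'b y (le_of_lt hy)) (hfun_nonneg _)
    have habs_int : IntegrableOn (fun y => |gfun n y - hfun (y - Real.sqrt n)|)
        (Set.Ioi (0:ℝ)) := by
      have : IntegrableOn (fun y => gfun n y - hfun (y - Real.sqrt n)) (Set.Ioi (0:ℝ)) :=
        (gfun_integrableOn n).sub ((hshift_integrable n).integrableOn)
      exact this.abs
    calc ‖(∫ y in Set.Ioi (0:ℝ), a y * ((gfun n y : ℝ) : ℂ))
            - ∫ y in Set.Ioi (0:ℝ), a y * ((hfun (y - Real.sqrt n) : ℝ) : ℂ)‖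
        = ‖∫ y in Set.Ioi (0:ℝ), (a y * ((gfun n y : ℝ) : ℂ)
            - a y * ((hfun (y - Real.sqrt n) : ℝ) : ℂ))‖ := by
          rw [integral_sub Iag Iah]
      _ ≤ ∫ y in Set.Ioi (0:ℝ), ‖a y * ((gfun n y : ℝ) : ℂ)
            - a y * ((hfun (y - Real.sqrt n) : ℝ) : ℂ)‖ := norm_integral_le_integral_norm _
      _ ≤ ∫ y in Set.Ioi (0:ℝ), C' * |gfun n y - hfun (y - Real.sqrt n)| := by
          apply integral_mono_of_nonneg
          · exact Eventually.of_forall (fun y => norm_nonneg _)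
          · exact habs_int.const_mul C'
          · filter_upwards [ae_restrict_mem measurableSet_Ioi] with y hy
            rw [← mul_sub, norm_mul, ← Complex.ofReal_sub, Complex.norm_real, Real.norm_eq_abs]
            exact mul_le_mul_of_nonneg_right (by
              exact hC'b y (le_of_lt hy)) (abs_nonneg _)
      _ = C' * ∫ y in Set.Ioi (0:ℝ), |gfun n y - hfun (y - Real.sqrt n)| :=
          integral_const_mul _ _
      _ ≤ C' * (2 - 2 * ∫ x : ℝ, min (ghat n x) (hfun x)) :=
          mul_le_mul_of_nonneg_left (Abound n) hC'0
  have hlim : Tendsto (fun n : ℕ => C' * (2 - 2 * ∫ x : ℝ, min (ghat n x) (hfun x)))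
      atTop (nhds 0) := by
    have := ((M_tendsto.const_mul 2).const_sub 2).const_mul C'
    simpa using this
  exact squeeze_zero (fun n => norm_nonneg _) keybound hlim
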